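/- arXiv:1404.4660 — 4 statements merged into one kernel-verified Lean document; each statement's English description precedes it below -/
import Mathlib

section
/- With 0 < ε < 1, 0 < c < 1, and 2ε² < 1 + c, the inequality −√(c − (1+c)(R̄² − c)/(1 − c)) < −ε√(1 − 2(R̄² − c)/(1 − c)) holds if and only if 2c − (1+c)R̄² > ε²(1 + c − 2R̄²); consequently, period-one points exist in the bulk of the shell of radius R̄ only if c < R̄² < (ε²(1 + c) − 2c)/(2ε² − (1 + c)). -/
/-- With 0 < ε < 1, 0 < c < 1 and 2ε² < 1 + c, the inequality
−√(c − (1+c)(R̄²−c)/(1−c)) < −ε√(1 − 2(R̄²−c)/(1−c)) holds iff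
2c − (1+c)R̄² > ε²(1 + c − 2R̄²); consequently period-one points exist on the
bulk shell of radius R̄ only if c < R̄² < (ε²(1+c) − 2c)/(2ε² − (1+c)). -/
theorem period_one_existence_condition (ε c R : ℝ)
    (hε0 : 0 < ε) (hε1 : ε < 1) (hc0 : 0 < c) (hc1 : c < 1)
    (hden : 2 * ε ^ 2 < 1 + c)
    (hA : 0 ≤ c - (1 + c) * (R ^ 2 - c) / (1 - c))
    (hB : 0 ≤ 1 - 2 * (R ^ 2 - c) / (1 - c)) :
    ((-Real.sqrt (c - (1 + c) * (R ^ 2 - c) / (1 - c)) <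
        -(ε * Real.sqrt (1 - 2 * (R ^ 2 - c) / (1 - c)))) ↔
      2 * c - (1 + c) * R ^ 2 > ε ^ 2 * (1 + c - 2 * R ^ 2)) ∧
    ((c < R ^ 2 ∧
        -Real.sqrt (c - (1 + c) * (R ^ 2 - c) / (1 - c)) <
          -(ε * Real.sqrt (1 - 2 * (R ^ 2 - c) / (1 - c)))) →
      c < R ^ 2 ∧ R ^ 2 < (ε ^ 2 * (1 + c) - 2 * c) / (2 * ε ^ 2 - (1 + c))) := by
  have h1c : (0:ℝ) < 1 - c := by linarith
  have hεB : 0 ≤ ε * Real.sqrt (1 - 2 * (R ^ 2 - c) / (1 - c)) :=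
    mul_nonneg hε0.le (Real.sqrt_nonneg _)
  have key : (-Real.sqrt (c - (1 + c) * (R ^ 2 - c) / (1 - c)) <
        -(ε * Real.sqrt (1 - 2 * (R ^ 2 - c) / (1 - c)))) ↔
      2 * c - (1 + c) * R ^ 2 > ε ^ 2 * (1 + c - 2 * R ^ 2) := by
    rw [neg_lt_neg_iff, Real.lt_sqrt hεB, mul_pow, Real.sq_sqrt hB]
    constructor
    · intro h
      have := mul_lt_mul_of_pos_right h h1c
      have e1 : ε ^ 2 * (1 - 2 * (R ^ 2 - c) / (1 - c)) * (1 - c)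
          = ε ^ 2 * (1 + c - 2 * R ^ 2) := by field_simp; ring
      have e2 : (c - (1 + c) * (R ^ 2 - c) / (1 - c)) * (1 - c)
          = 2 * c - (1 + c) * R ^ 2 := by field_simp; ring
      linarith [this, e1.symm ▸ this]
    · intro h
      have e1 : ε ^ 2 * (1 - 2 * (R ^ 2 - c) / (1 - c)) * (1 - c)
          = ε ^ 2 * (1 + c - 2 * R ^ 2) := by field_simp; ring
      have e2 : (c - (1 + c) * (R ^ 2 - c) / (1 - c)) * (1 - c)
          = 2 * c - (1 + c) * R ^ 2 := by field_simp; ring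
      have : ε ^ 2 * (1 - 2 * (R ^ 2 - c) / (1 - c)) * (1 - c) <
          (c - (1 + c) * (R ^ 2 - c) / (1 - c)) * (1 - c) := by
        rw [e1, e2]; exact h
      exact lt_of_mul_lt_mul_right this h1c.le
    done
  refine ⟨key, ?_⟩
  rintro ⟨hcR, hlt⟩
  refine ⟨hcR, ?_⟩
  have h := key.mp hlt
  have hneg : 2 * ε ^ 2 - (1 + c) < 0 := by linarith
  rw [lt_div_iff_of_neg hneg]
  nlinarith [h]
end

section
/- For a flowing-layer trajectory starting on the interface at (x₀, y₀ = −δ(x₀)) with δ(x) = ε√(L² − x²), 0 < ε < 1, 0 < L, |x₀| < L, the solution of dx/dt = (1/ε²)(δ(x) + y), with y determined by constancy of ψ_fl = (1/ε²)[δ(x)y + y²/2], is x(t) = √(L² + κ) sin(t/ε + arcsin(x₀/√(L² + κ))), where κ = (2/ε²)[δ(x₀)y₀ + y₀²/2] = x₀² − L². -/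
/-- For a flowing-layer trajectory starting on the interface at
(x₀, y₀ = −δ(x₀)), δ(x) = ε√(L²−x²), the solution of the flowing-layer
equation dx/dt = (1/ε)√(L²+κ−x²) is
x(t) = √(L²+κ) sin(t/ε + arcsin(x₀/√(L²+κ))) with
κ = (2/ε²)[δ(x₀)y₀ + y₀²/2] = x₀² − L². -/
theorem flowing_layer_trajectory_solution (ε L x₀ y₀ : ℝ)
    (hε0 : 0 < ε) (hε1 : ε < 1) (hL : 0 < L)
    (hx₀ : |x₀| < L) (hx₀neg : x₀ < 0)
    (hy₀ : y₀ = -(ε * Real.sqrt (L ^ 2 - x₀ ^ 2))) :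
    let δ : ℝ → ℝ := fun x => ε * Real.sqrt (L ^ 2 - x ^ 2)
    let κ := (2 / ε ^ 2) * (δ x₀ * y₀ + y₀ ^ 2 / 2)
    let x : ℝ → ℝ := fun t =>
      Real.sqrt (L ^ 2 + κ) *
        Real.sin (t / ε + Real.arcsin (x₀ / Real.sqrt (L ^ 2 + κ)))
    κ = x₀ ^ 2 - L ^ 2 ∧ x 0 = x₀ ∧
      ∀ t ∈ Set.Icc (0 : ℝ) (ε * Real.pi),
        HasDerivAt x ((1 / ε) * Real.sqrt (L ^ 2 + κ - x t ^ 2)) t := by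
  intro δ κ x
  have hεne : ε ≠ 0 := ne_of_gt hε0
  have hnn : (0:ℝ) ≤ L ^ 2 - x₀ ^ 2 := by
    nlinarith [abs_nonneg x₀, sq_abs x₀, hx₀]
  have hsq : Real.sqrt (L ^ 2 - x₀ ^ 2) ^ 2 = L ^ 2 - x₀ ^ 2 :=
    Real.sq_sqrt hnn
  have hκ : κ = x₀ ^ 2 - L ^ 2 := by
    show (2 / ε ^ 2) * (ε * Real.sqrt (L ^ 2 - x₀ ^ 2) * y₀ + y₀ ^ 2 / 2)
        = x₀ ^ 2 - L ^ 2
    rw [hy₀]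
    field_simp
    nlinarith [hsq]
  have hLκ : L ^ 2 + κ = x₀ ^ 2 := by rw [hκ]; ring
  have hsqrtLκ : Real.sqrt (L ^ 2 + κ) = -x₀ := by
    rw [hLκ, Real.sqrt_sq_eq_abs, abs_of_neg hx₀neg]
  have hx₀ne : x₀ ≠ 0 := ne_of_lt hx₀neg
  have harc : Real.arcsin (x₀ / Real.sqrt (L ^ 2 + κ)) = -(Real.pi / 2) := by
    rw [hsqrtLκ]
    have : x₀ / -x₀ = -1 := by field_simp
    rw [this, Real.arcsin_neg, Real.arcsin_one]
  have hxeq : ∀ t, x t = -x₀ * Real.sin (t / ε + -(Real.pi / 2)) := by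
    intro t
    show Real.sqrt (L ^ 2 + κ) * Real.sin (t / ε + Real.arcsin (x₀ / Real.sqrt (L ^ 2 + κ)))
        = _
    rw [harc, hsqrtLκ]
  refine ⟨hκ, ?_, ?_⟩
  · rw [hxeq 0]
    simp [Real.sin_neg]
  · intro t ht
    have hinner : HasDerivAt (fun t : ℝ => t / ε + -(Real.pi / 2)) (1 / ε) t := by
      simpa using ((hasDerivAt_id t).div_const ε).add_const (-(Real.pi / 2))
    have hsin : HasDerivAt (fun t : ℝ => Real.sin (t / ε + -(Real.pi / 2)))
        (Real.cos (t / ε + -(Real.pi / 2)) * (1 / ε)) t :=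
      (Real.hasDerivAt_sin _).comp t hinner
    have hD : HasDerivAt x (-x₀ * (Real.cos (t / ε + -(Real.pi / 2)) * (1 / ε))) t := by
      have := hsin.const_mul (-x₀)
      refine HasDerivAt.congr_of_eventuallyEq this ?_
      filter_upwards with s
      rw [hxeq s]
    convert hD using 1
    have hcos : Real.cos (t / ε + -(Real.pi / 2)) = Real.sin (t / ε) := by
      rw [show t / ε + -(Real.pi / 2) = t / ε - Real.pi / 2 by ring,
        Real.cos_sub_pi_div_two]
    have hsin_eq : Real.sin (t / ε + -(Real.pi / 2)) = -Real.cos (t / ε) := by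
      rw [show t / ε + -(Real.pi / 2) = t / ε - Real.pi / 2 by ring,
        Real.sin_sub_pi_div_two]
    have hsin_nn : 0 ≤ Real.sin (t / ε) := by
      apply Real.sin_nonneg_of_nonneg_of_le_pi
      · exact div_nonneg ht.1 (le_of_lt hε0)
      · rw [div_le_iff₀ hε0]
        linarith [ht.2]
    have hval : L ^ 2 + κ - x t ^ 2 = x₀ ^ 2 * Real.sin (t / ε) ^ 2 := by
      rw [hLκ, hxeq t, hsin_eq]
      have := Real.sin_sq_add_cos_sq (t / ε)
      nlinarith
    rw [hval, hcos]
    rw [show x₀ ^ 2 * Real.sin (t / ε) ^ 2 = (-x₀ * Real.sin (t / ε)) ^ 2 by ring,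
      Real.sqrt_sq (by nlinarith)]
    ring
end

section
/- The total period of a closed streamline in a circular cross-section, equal to the time in the bulk plus the time in the flowing layer, is T = −2 arcsin(x₁/√(x₁² + y₁²)) + επ, where (x₁, y₁) with x₁ < 0, y₁ = −ε√(L² − x₁²) is the entry point into the flowing layer; equivalently T = −2 arcsin(x₁/√((1 − ε²)x₁² + ε²L²)) + επ. In particular the time spent in the flowing layer equals επ for every streamline. -/
/-- The period of a closed streamline is
T = −2 arcsin(x₁/√(x₁²+y₁²)) + επ = −2 arcsin(x₁/√((1−ε²)x₁²+ε²L²)) + επ,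
where (x₁,y₁), x₁ < 0, y₁ = −ε√(L²−x₁²), is the entry point into the flowing
layer; and the time spent in the flowing layer equals επ for every
streamline. -/
theorem streamline_period (ε L x₁ y₁ : ℝ)
    (hε0 : 0 < ε) (hε1 : ε < 1) (hL : 0 < L)
    (hx₁ : x₁ < 0) (hx₁L : |x₁| < L)
    (hy₁ : y₁ = -(ε * Real.sqrt (L ^ 2 - x₁ ^ 2))) :
    (-2 * Real.arcsin (x₁ / Real.sqrt (x₁ ^ 2 + y₁ ^ 2)) + ε * Real.pi =
      -2 * Real.arcsin (x₁ / Real.sqrt ((1 - ε ^ 2) * x₁ ^ 2 + ε ^ 2 * L ^ 2)) +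
        ε * Real.pi) ∧
    ε * (Real.arcsin (-x₁ / Real.sqrt (L ^ 2 + (x₁ ^ 2 - L ^ 2))) -
          Real.arcsin (x₁ / Real.sqrt (L ^ 2 + (x₁ ^ 2 - L ^ 2)))) =
      ε * Real.pi := by
  have hLx : (0:ℝ) ≤ L ^ 2 - x₁ ^ 2 := by
    nlinarith [abs_nonneg x₁, sq_abs x₁, sq_nonneg (L - |x₁|)]
  constructor
  · have : x₁ ^ 2 + y₁ ^ 2 = (1 - ε ^ 2) * x₁ ^ 2 + ε ^ 2 * L ^ 2 := by
      rw [hy₁]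
      have := Real.sq_sqrt hLx
      ring_nf
      have h2 : Real.sqrt (-x₁ ^ 2 + L ^ 2) ^ 2 = -x₁ ^ 2 + L ^ 2 :=
        Real.sq_sqrt (by linarith)
      nlinarith [h2]
    rw [this]
  · have hs : Real.sqrt (L ^ 2 + (x₁ ^ 2 - L ^ 2)) = -x₁ := by
      have : L ^ 2 + (x₁ ^ 2 - L ^ 2) = (-x₁) ^ 2 := by ring
      rw [this, Real.sqrt_sq (by linarith)]
    have hd : x₁ / -x₁ = -1 := by
      rw [div_neg, div_self (by linarith : x₁ ≠ 0)]
    have hd2 : -x₁ / -x₁ = 1 := div_self (by linarith : -x₁ ≠ 0)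
    rw [hs, hd, hd2, Real.arcsin_one, Real.arcsin_neg_one]
    ring
end

section
/- If 0 < ε < 1 and 0 < c₁, c₃ < 1 with ε² < min(c₁, c₃), then (ε² − c₁)(1 − c₃) + (ε² − 1)(1 − c₁) < 0, and the condition y* < −ε√(1 − (R̄² − c₃)/(1 − c₃) − (R̄² − c₁)/(1 − c₁)) with y* = −√(c₁ − c₁(R̄² − c₁)/(1 − c₁) − (R̄² − c₃)/(1 − c₃)) is equivalent to R̄² < [(ε² − c₁)(1 − c₃) + (ε² − 1)(1 − c₁)c₃]/[(ε² − c₁)(1 − c₃) + (ε² − 1)(1 − c₁)], given R̄² > max(c₁, c₃). -/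
/-- If 0 < ε < 1 and 0 < c₁, c₃ < 1 with ε² < min(c₁,c₃), then
(ε²−c₁)(1−c₃) + (ε²−1)(1−c₁) < 0, and for R̄² > max(c₁,c₃) the condition
y* < −ε√(1 − (R̄²−c₃)/(1−c₃) − (R̄²−c₁)/(1−c₁)), with
y* = −√(c₁ − c₁(R̄²−c₁)/(1−c₁) − (R̄²−c₃)/(1−c₃)), is equivalent to
R̄² < [(ε²−c₁)(1−c₃) + (ε²−1)(1−c₁)c₃]/[(ε²−c₁)(1−c₃) + (ε²−1)(1−c₁)]. -/
theorem existence_condition_unequal_angles (ε c₁ c₃ R : ℝ)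
    (hε0 : 0 < ε) (hε1 : ε < 1)
    (hc₁0 : 0 < c₁) (hc₁1 : c₁ < 1) (hc₃0 : 0 < c₃) (hc₃1 : c₃ < 1)
    (hεc : ε ^ 2 < min c₁ c₃)
    (hA : 0 ≤ c₁ - c₁ * (R ^ 2 - c₁) / (1 - c₁) - (R ^ 2 - c₃) / (1 - c₃))
    (hB : 0 ≤ 1 - (R ^ 2 - c₃) / (1 - c₃) - (R ^ 2 - c₁) / (1 - c₁)) :
    ((ε ^ 2 - c₁) * (1 - c₃) + (ε ^ 2 - 1) * (1 - c₁) < 0) ∧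
    (max c₁ c₃ < R ^ 2 →
      ((-Real.sqrt (c₁ - c₁ * (R ^ 2 - c₁) / (1 - c₁) -
            (R ^ 2 - c₃) / (1 - c₃)) <
          -(ε * Real.sqrt (1 - (R ^ 2 - c₃) / (1 - c₃) -
              (R ^ 2 - c₁) / (1 - c₁)))) ↔
        R ^ 2 < ((ε ^ 2 - c₁) * (1 - c₃) + (ε ^ 2 - 1) * (1 - c₁) * c₃) /
            ((ε ^ 2 - c₁) * (1 - c₃) + (ε ^ 2 - 1) * (1 - c₁)))) := by
  have hεc₁ : ε ^ 2 < c₁ := lt_of_lt_of_le hεc (min_le_left _ _)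
  have hεc₃ : ε ^ 2 < c₃ := lt_of_lt_of_le hεc (min_le_right _ _)
  have h1c₁ : (0:ℝ) < 1 - c₁ := by linarith
  have h1c₃ : (0:ℝ) < 1 - c₃ := by linarith
  have hD : (ε ^ 2 - c₁) * (1 - c₃) + (ε ^ 2 - 1) * (1 - c₁) < 0 := by nlinarith
  refine ⟨hD, fun _ => ?_⟩
  set A := c₁ - c₁ * (R ^ 2 - c₁) / (1 - c₁) - (R ^ 2 - c₃) / (1 - c₃) with hAdef
  set B := 1 - (R ^ 2 - c₃) / (1 - c₃) - (R ^ 2 - c₁) / (1 - c₁) with hBdef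
  have key : (A - ε ^ 2 * B) * ((1 - c₁) * (1 - c₃)) =
      R ^ 2 * ((ε ^ 2 - c₁) * (1 - c₃) + (ε ^ 2 - 1) * (1 - c₁)) -
      ((ε ^ 2 - c₁) * (1 - c₃) + (ε ^ 2 - 1) * (1 - c₁) * c₃) := by
    rw [hAdef, hBdef]
    field_simp
    ring
  have step1 : (-Real.sqrt A < -(ε * Real.sqrt B)) ↔ ε ^ 2 * B < A := by
    rw [neg_lt_neg_iff]
    have hεB : 0 ≤ ε * Real.sqrt B := mul_nonneg hε0.le (Real.sqrt_nonneg _)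
    rw [show ε * Real.sqrt B < Real.sqrt A ↔ (ε * Real.sqrt B) ^ 2 < A from
      Real.lt_sqrt hεB]
    rw [mul_pow, Real.sq_sqrt hB]
  rw [step1, lt_div_iff_of_neg hD]
  constructor
  · intro h
    nlinarith [mul_pos h1c₁ h1c₃]
  · intro h
    nlinarith [mul_pos h1c₁ h1c₃]
end
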